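/- For every discount factor λ with 1/2 < λ < 1 and every finite word w over {a,b} that is ambiguous (i.e., 1 - λ^|w|/(1-λ) ≤ v_a(w) < 1, where v_a(w) = Σ_{i : w_i = a} λ^(i-1) is the discounted count of a's in w), at least one of the extensions w·a or w·b is ambiguous. -/

import Mathlib

/-- Discounted count of `a`'s (encoded as `true`) in a finite word,
    position `i` (0-indexed) contributing `lam ^ i`. -/
def va (lam : ℝ) (w : List Bool) : ℝ :=
  ∑ i ∈ Finset.range w.length, if w.getD i false then lam ^ i else 0

/-- A finite word is ambiguous if `1 - lam^|w|/(1-lam) ≤ v_a(w) < 1`. -/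
def Ambiguous (lam : ℝ) (w : List Bool) : Prop :=
  1 - lam ^ w.length / (1 - lam) ≤ va lam w ∧ va lam w < 1

lemma va_append (lam : ℝ) (w : List Bool) (c : Bool) :
    va lam (w ++ [c]) = va lam w + if c then lam ^ w.length else 0 := by
  unfold va
  rw [List.length_append, List.length_singleton, Finset.sum_range_succ]
  congr 1
  · apply Finset.sum_congr rfl
    intro i hi
    simp only [Finset.mem_range] at hi
    rw [List.getD_eq_getElem?_getD, List.getD_eq_getElem?_getD,
      List.getElem?_append_left hi]
  · rw [List.getD_eq_getElem?_getD, List.getElem?_append_right (le_refl _)]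
    simp

theorem ambiguous_extension (lam : ℝ) (hl : 1/2 < lam) (hl1 : lam < 1)
    (w : List Bool) (hw : Ambiguous lam w) :
    Ambiguous lam (w ++ [true]) ∨ Ambiguous lam (w ++ [false]) := by
  obtain ⟨h1, h2⟩ := hw
  have hlpos : (0:ℝ) < lam := by linarith
  have hpow : (0:ℝ) < lam ^ w.length := pow_pos hlpos _
  have h1l : (0:ℝ) < 1 - lam := by linarith
  by_cases hc : va lam w + lam ^ w.length < 1
  · left
    constructor
    · rw [va_append, List.length_append, List.length_singleton, if_pos rfl]
      have key : lam ^ (w.length + 1) / (1 - lam) = lam ^ w.length / (1 - lam) - lam ^ w.length := by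
        field_simp
        ring
      rw [key]
      linarith
    · rw [va_append, if_pos rfl]; exact hc
  · right
    push_neg at hc
    constructor
    · rw [va_append, List.length_append, List.length_singleton, if_neg (by simp)]
      have key : lam ^ w.length ≤ lam ^ (w.length + 1) / (1 - lam) := by
        rw [le_div_iff₀ h1l, pow_succ]
        nlinarith
      linarith
    · rw [va_append, if_neg (by simp)]; linarith
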